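/- arXiv:1303.1415 — 3 statements merged into one kernel-verified Lean document; each statement's English description precedes it below -/
import Mathlib

section
/- Assume E and C have the splitting property and satisfy (EC-3)(i). Let u ∈ X with u ≠ 0 and let (w_n) be a sequence in X with w_n ≠ 0 for all n converging weakly to 0. Then there is a subsequence along which Λ(u + w_n) and Λ(w_n) converge and lim Λ(u + w_n) ≥ min( Λ(u), lim Λ(w_n) ). -/
open Filter Topology

variable {X : Type*}

/-- A sequence converges weakly to `0` in a normed space: every continuous
linear functional applied to it tends to `0`. -/
def WeakToZero [NormedAddCommGroup X] [NormedSpace ℝ X] (w : ℕ → X) : Prop :=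
  ∀ f : X →L[ℝ] ℝ, Filter.Tendsto (fun n => f (w n)) atTop (𝓝 0)

/-- A functional `F : X → ℝ` has the splitting property: whenever `w n ⇀ 0`
weakly, `F (u + w n) = F u + F (w n) + o(1)`. -/
def SplittingProp [NormedAddCommGroup X] [NormedSpace ℝ X] (F : X → ℝ) : Prop :=
  ∀ (u : X) (w : ℕ → X), WeakToZero w →
    Filter.Tendsto (fun n => F (u + w n) - F u - F (w n)) atTop (𝓝 0)

/-- Mediant inequality: for positive denominators, the mediant lies above the
minimum of the two fractions. -/
lemma mediant_min_le {x y p q : ℝ} (hp : 0 < p) (hq : 0 < q) :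
    min (x / p) (y / q) ≤ (x + y) / (p + q) := by
  rcases le_total (x / p) (y / q) with h | h
  · rw [min_eq_left h, div_le_div_iff₀ hp (by positivity)]
    rw [div_le_div_iff₀ hp hq] at h
    nlinarith
  · rw [min_eq_right h, div_le_div_iff₀ hq (by positivity)]
    rw [div_le_div_iff₀ hq hp] at h
    nlinarith

/-- Assume `E` and `C` have the splitting property and satisfy
(EC-3)(i).  Let `u ≠ 0` and let `w n ≠ 0` converge weakly to `0`.  Then there is a
subsequence along which `Λ(u + w n)` and `Λ(w n)` converge (in the extended reals)
and `lim Λ(u + w n) ≥ min (Λ u) (lim Λ(w n))`, where `Λ v = E v / C v`. -/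
theorem lam_liminf_splitting
    [NormedAddCommGroup X] [InnerProductSpace ℝ X] [CompleteSpace X]
    (E C : X → ℝ) (a s : ℝ) (ha : 0 < a) (hs : 1 < s)
    (hEsplit : SplittingProp E) (hCsplit : SplittingProp C)
    (hEC3i : ∀ u : X, u ≠ 0 → 0 < C u ∧ 0 < E u + a * C u ^ s)
    (u : X) (hu : u ≠ 0) (w : ℕ → X) (hw : ∀ n, w n ≠ 0) (hw0 : WeakToZero w) :
    ∃ φ : ℕ → ℕ, StrictMono φ ∧ ∃ L L' : EReal,
      Filter.Tendsto (fun k => ((E (u + w (φ k)) / C (u + w (φ k)) : ℝ) : EReal))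
        atTop (𝓝 L) ∧
      Filter.Tendsto (fun k => ((E (w (φ k)) / C (w (φ k)) : ℝ) : EReal))
        atTop (𝓝 L') ∧
      min ((E u / C u : ℝ) : EReal) L' ≤ L := by
  -- splitting error terms
  set ε : ℕ → ℝ := fun n => E (u + w n) - E u - E (w n) with hε
  set δ : ℕ → ℝ := fun n => C (u + w n) - C u - C (w n) with hδ
  have hεt : Tendsto ε atTop (𝓝 0) := hEsplit u w hw0
  have hδt : Tendsto δ atTop (𝓝 0) := hCsplit u w hw0
  have hCu : 0 < C u := (hEC3i u hu).1
  have hCw : ∀ n, 0 < C (w n) := fun n => (hEC3i (w n) (hw n)).1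
  -- eventually `C u + δ n > 0`
  have hev : ∀ᶠ n in atTop, 0 < C u + δ n := by
    have : Tendsto (fun n => C u + δ n) atTop (𝓝 (C u + 0)) :=
      tendsto_const_nhds.add hδt
    rw [add_zero] at this
    exact this.eventually (eventually_gt_nhds hCu)
  -- pointwise mediant bound (eventually)
  have hkey : ∀ᶠ n in atTop,
      min ((E u + ε n) / (C u + δ n)) (E (w n) / C (w n))
        ≤ E (u + w n) / C (u + w n) := by
    filter_upwards [hev] with n hn
    have h1 : E (u + w n) = (E u + ε n) + E (w n) := by simp [hε]; ring
    have h2 : C (u + w n) = (C u + δ n) + C (w n) := by simp [hδ]; ring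
    rw [h1, h2]
    exact mediant_min_le hn (hCw n)
  -- convergence of the perturbed `Λ u`
  have han : Tendsto (fun n => (E u + ε n) / (C u + δ n)) atTop (𝓝 (E u / C u)) := by
    have hE : Tendsto (fun n => E u + ε n) atTop (𝓝 (E u)) := by
      have h : Tendsto (fun n => E u + ε n) atTop (𝓝 (E u + 0)) :=
        tendsto_const_nhds.add hεt
      rwa [add_zero] at h
    have hC : Tendsto (fun n => C u + δ n) atTop (𝓝 (C u)) := by
      have h : Tendsto (fun n => C u + δ n) atTop (𝓝 (C u + 0)) :=
        tendsto_const_nhds.add hδt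
      rwa [add_zero] at h
    exact hE.div hC hCu.ne'
  -- extract a subsequence along which both `EReal`-valued sequences converge
  set A : ℕ → EReal := fun n => ((E (u + w n) / C (u + w n) : ℝ) : EReal) with hA
  set B : ℕ → EReal := fun n => ((E (w n) / C (w n) : ℝ) : EReal) with hB
  obtain ⟨L, -, φ₁, hφ₁, hLA⟩ :=
    isCompact_univ.tendsto_subseq (x := A) (fun n => Set.mem_univ n)
  obtain ⟨L', -, φ₂, hφ₂, hLB⟩ :=
    isCompact_univ.tendsto_subseq (x := B ∘ φ₁) (fun n => Set.mem_univ n)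
  refine ⟨φ₁ ∘ φ₂, hφ₁.comp hφ₂, L, L', ?_, ?_, ?_⟩
  · exact hLA.comp hφ₂.tendsto_atTop
  · exact hLB
  · -- pass the mediant inequality to the limit
    have hmin : Tendsto
        (fun k => min (((E u + ε (φ₁ (φ₂ k))) / (C u + δ (φ₁ (φ₂ k))) : ℝ) : EReal)
          (B (φ₁ (φ₂ k)))) atTop (𝓝 (min ((E u / C u : ℝ) : EReal) L')) := by
      apply Tendsto.min
      · exact EReal.tendsto_coe.mpr (han.comp ((hφ₁.comp hφ₂).tendsto_atTop))
      · exact hLB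
    have hLAc : Tendsto (fun k => A (φ₁ (φ₂ k))) atTop (𝓝 L) :=
      (hLA.comp hφ₂.tendsto_atTop)
    refine le_of_tendsto_of_tendsto hmin hLAc ?_
    have hkey' : ∀ᶠ k in atTop,
        min ((E u + ε (φ₁ (φ₂ k))) / (C u + δ (φ₁ (φ₂ k)))) (E (w (φ₁ (φ₂ k))) / C (w (φ₁ (φ₂ k))))
          ≤ E (u + w (φ₁ (φ₂ k))) / C (u + w (φ₁ (φ₂ k))) :=
      (hφ₁.comp hφ₂).tendsto_atTop.eventually hkey
    filter_upwards [hkey'] with k hk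
    have : ((min ((E u + ε (φ₁ (φ₂ k))) / (C u + δ (φ₁ (φ₂ k))))
        (E (w (φ₁ (φ₂ k))) / C (w (φ₁ (φ₂ k)))) : ℝ) : EReal)
        ≤ ((E (u + w (φ₁ (φ₂ k))) / C (u + w (φ₁ (φ₂ k))) : ℝ) : EReal) :=
      EReal.coe_le_coe_iff.mpr hk
    calc min (((E u + ε (φ₁ (φ₂ k))) / (C u + δ (φ₁ (φ₂ k))) : ℝ) : EReal) (B (φ₁ (φ₂ k)))
        = ((min ((E u + ε (φ₁ (φ₂ k))) / (C u + δ (φ₁ (φ₂ k))))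
            (E (w (φ₁ (φ₂ k))) / C (w (φ₁ (φ₂ k)))) : ℝ) : EReal) := by
          rw [hB]
          exact (Monotone.map_min (fun x y hxy => EReal.coe_le_coe_iff.mpr hxy)).symm
      _ ≤ A (φ₁ (φ₂ k)) := this
end

section
/- Assume E and C satisfy (EC-3)(i) with constants a > 0 and s > 1. Then for every δ > 0 and every u ∈ X with u ≠ 0, J_δ(u) ≥ (δ/2)Φ(u) − M_δ, where M_δ = −a · min_{t ≥ 0} ( (δ/2)t^s − t^{s−1} ) (this minimum is finite and nonpositive, so M_δ ≥ 0). -/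
open Filter Topology

/-- Under (EC-3)(i), for every `δ > 0` and every `u ≠ 0`,
`J_δ(u) ≥ (δ/2) Φ(u) − M_δ`, where `Λ u = E u / C u`, `Φ u = E u + 2a (C u)^s`,
`J_δ u = Λ u + δ Φ u`, and
`M_δ = −a ⬝ inf_{t ≥ 0} ((δ/2) t^s − t^{s−1})`; the infimum is finite (the set of
values is bounded below) and nonpositive, so `M_δ ≥ 0`. -/
theorem Jdelta_lower_bound
    {X : Type*} [NormedAddCommGroup X] [InnerProductSpace ℝ X] [CompleteSpace X]
    (E C : X → ℝ) (a s : ℝ) (ha : 0 < a) (hs : 1 < s)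
    (hEC3i : ∀ u : X, u ≠ 0 → 0 < C u ∧ 0 < E u + a * C u ^ s)
    (δ : ℝ) (hδ : 0 < δ) :
    BddBelow ((fun t : ℝ => δ / 2 * t ^ s - t ^ (s - 1)) '' Set.Ici 0) ∧
    sInf ((fun t : ℝ => δ / 2 * t ^ s - t ^ (s - 1)) '' Set.Ici 0) ≤ 0 ∧
    0 ≤ -a * sInf ((fun t : ℝ => δ / 2 * t ^ s - t ^ (s - 1)) '' Set.Ici 0) ∧
    ∀ u : X, u ≠ 0 →
      δ / 2 * (E u + 2 * a * C u ^ s)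
          - (-a * sInf ((fun t : ℝ => δ / 2 * t ^ s - t ^ (s - 1)) '' Set.Ici 0))
        ≤ E u / C u + δ * (E u + 2 * a * C u ^ s) := by
  set f : ℝ → ℝ := fun t : ℝ => δ / 2 * t ^ s - t ^ (s - 1) with hf
  have hs1 : (0:ℝ) ≤ s - 1 := by linarith
  have hbdd : BddBelow (f '' Set.Ici 0) := by
    refine ⟨-(2/δ) ^ (s-1), ?_⟩
    rintro x ⟨t, ht, rfl⟩
    simp only [Set.mem_Ici] at ht
    rcases le_or_gt t (2/δ) with h | h
    · have h1 : t ^ (s-1) ≤ (2/δ) ^ (s-1) := Real.rpow_le_rpow ht h hs1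
      have h2 : 0 ≤ δ / 2 * t ^ s := by
        have := Real.rpow_nonneg ht s
        positivity
      simp only [hf]
      linarith
    · have ht0 : 0 < t := lt_trans (by positivity) h
      have h3 : t ^ s = t ^ (s-1) * t := by
        rw [Real.rpow_sub ht0, Real.rpow_one]
        field_simp
      have h4 : 0 ≤ t ^ (s-1) := Real.rpow_nonneg ht _
      have h5 : (1:ℝ) ≤ δ / 2 * t := by
        rw [div_lt_iff₀ hδ] at h
        nlinarith
      have h6 : (0:ℝ) ≤ (2/δ) ^ (s-1) := Real.rpow_nonneg (by positivity) _
      have : t ^ (s-1) ≤ δ / 2 * t ^ s := by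
        rw [h3]
        nlinarith
      simp only [hf]
      linarith
  have hmem0 : (0:ℝ) ∈ f '' Set.Ici 0 := by
    refine ⟨0, Set.self_mem_Ici, ?_⟩
    simp [hf, Real.zero_rpow (by linarith : s ≠ 0),
      Real.zero_rpow (by linarith : s - 1 ≠ 0)]
  have hinf0 : sInf (f '' Set.Ici 0) ≤ 0 := csInf_le hbdd hmem0
  refine ⟨hbdd, hinf0, by nlinarith, ?_⟩
  clear_value f
  intro u hu
  obtain ⟨hC, hE⟩ := hEC3i u hu
  have hfCu : sInf (f '' Set.Ici 0) ≤ f (C u) :=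
    csInf_le hbdd ⟨C u, hC.le, rfl⟩
  have hCs : 0 < C u ^ s := Real.rpow_pos_of_pos hC s
  have hCs1 : 0 < C u ^ (s-1) := Real.rpow_pos_of_pos hC (s-1)
  have hEdiv : -(a * C u ^ (s-1)) ≤ E u / C u := by
    rw [le_div_iff₀ hC]
    have h3 : C u ^ (s-1) * C u = C u ^ s := by
      rw [show s - 1 = s + (-1) by ring, Real.rpow_add hC, Real.rpow_neg_one]
      field_simp
    nlinarith
  have hfC : f (C u) = δ / 2 * C u ^ s - C u ^ (s-1) := by rw [hf]
  have key : a * f (C u) ≤ E u / C u + δ / 2 * (E u + 2 * a * C u ^ s) := by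
    rw [hfC]
    nlinarith
  have h7 : a * sInf (f '' Set.Ici 0) ≤ a * f (C u) :=
    mul_le_mul_of_nonneg_left hfCu ha.le
  linarith
end

section
/- Let X be a real Hilbert space, G a group acting on X by linear isometries, and V : X → ℝ a continuous, G-invariant functional with V ≥ 0 that is G-compact (every minimizing sequence of V is G-compact). Assume Γ = V^{-1}(0) is nonempty. Then Γ is G-compact, and for every sequence (u_n) in X one has V(u_n) → 0 if and only if dist(u_n, Γ) → 0. -/
open Filter Topology

noncomputable section

variable {X : Type*} [NormedAddCommGroup X] [InnerProductSpace ℝ X] [CompleteSpace X]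
variable {G : Type*} [Group G]

/-- A `G`-compact sequence: some subsequence, translated by group elements,
converges strongly. -/
def GCompactSeq (ρ : G → X →L[ℝ] X) (u : ℕ → X) : Prop :=
  ∃ φ : ℕ → ℕ, StrictMono φ ∧ ∃ g : ℕ → G, ∃ x : X,
    Filter.Tendsto (fun k => ρ (g k) (u (φ k))) atTop (𝓝 x)

/-- **Lemma `LC`.** Let `V ≥ 0` be a continuous, `G`-invariant,
`G`-compact functional whose zero set `Γ = V⁻¹(0)` is nonempty.  Then `Γ` is
`G`-compact and, for every sequence `(u n)`, `V (u n) → 0` iff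
`dist (u n, Γ) → 0`. -/
theorem Gcompact_zero_set
    (ρ : G → X →L[ℝ] X)
    (hiso : ∀ g x, ‖ρ g x‖ = ‖x‖) (hmul : ∀ g h x, ρ (g * h) x = ρ g (ρ h x))
    (V : X → ℝ) (hVcont : Continuous V) (hVnonneg : ∀ u, 0 ≤ V u)
    (hVinv : ∀ g u, V (ρ g u) = V u)
    (hVGcomp : ∀ u : ℕ → X,
        Filter.Tendsto (fun n => V (u n)) atTop (𝓝 (⨅ v : X, V v)) →
        GCompactSeq ρ u)
    (hΓ : (V ⁻¹' {0}).Nonempty) :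
    (∀ u : ℕ → X, (∀ n, u n ∈ V ⁻¹' {0}) → GCompactSeq ρ u) ∧
    (∀ u : ℕ → X,
        Filter.Tendsto (fun n => V (u n)) atTop (𝓝 0) ↔
        Filter.Tendsto (fun n => Metric.infDist (u n) (V ⁻¹' {0})) atTop (𝓝 0)) := by
  obtain ⟨x₀, hx₀⟩ := hΓ
  have hx₀0 : V x₀ = 0 := hx₀
  -- ρ 1 = id
  have hρ1 : ∀ x : X, ρ (1 : G) x = x := by
    intro x
    have hinj : ∀ a b : X, ρ (1 : G) a = ρ (1 : G) b → a = b := by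
      intro a b hab
      have : ‖a - b‖ = 0 := by
        rw [← hiso (1 : G) (a - b), map_sub, hab, sub_self, norm_zero]
      simpa [sub_eq_zero] using norm_eq_zero.mp this
    apply hinj
    rw [← hmul 1 1 x, one_mul]
  have hginv : ∀ (g : G) (x : X), ρ g⁻¹ (ρ g x) = x := by
    intro g x
    rw [← hmul, inv_mul_cancel, hρ1]
  -- the infimum of V is 0
  have hinf : (⨅ v : X, V v) = 0 := by
    apply le_antisymm
    · have hbdd : BddBelow (Set.range V) := ⟨0, by rintro y ⟨v, rfl⟩; exact hVnonneg v⟩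
      simpa [hx₀0] using ciInf_le hbdd x₀
    · exact le_ciInf hVnonneg
  have hmin : ∀ u : ℕ → X, Tendsto (fun n => V (u n)) atTop (𝓝 0) → GCompactSeq ρ u := by
    intro u hu
    exact hVGcomp u (hinf ▸ hu)
  -- part 1
  have part1 : ∀ u : ℕ → X, (∀ n, u n ∈ V ⁻¹' {0}) → GCompactSeq ρ u := by
    intro u hu
    apply hmin
    have : (fun n => V (u n)) = fun _ => (0 : ℝ) := funext fun n => hu n
    rw [this]
    exact tendsto_const_nhds
  refine ⟨part1, fun u => ⟨fun h => ?_, fun h => ?_⟩⟩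
  · -- V(u n) → 0 → dist(u n, Γ) → 0
    apply tendsto_of_subseq_tendsto
    intro ns hns
    obtain ⟨φ, hφ, g, x, hx⟩ := hmin (u ∘ ns) (h.comp hns)
    refine ⟨φ, ?_⟩
    -- V x = 0
    have hVx : V x = 0 := by
      have h1 : Tendsto (fun k => V (ρ (g k) (u (ns (φ k))))) atTop (𝓝 (V x)) :=
        (hVcont.tendsto x).comp hx
      have h2 : Tendsto (fun k => V (ρ (g k) (u (ns (φ k))))) atTop (𝓝 0) := by
        simpa [hVinv, Function.comp_def] using (h.comp hns).comp hφ.tendsto_atTop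
      exact tendsto_nhds_unique h1 h2
    have hxΓ : ∀ k, ρ (g k)⁻¹ x ∈ V ⁻¹' {0} := fun k => by
      simp [Set.mem_preimage, hVinv, hVx]
    have hbound : ∀ k, Metric.infDist (u (ns (φ k))) (V ⁻¹' {0})
        ≤ ‖ρ (g k) (u (ns (φ k))) - x‖ := by
      intro k
      calc Metric.infDist (u (ns (φ k))) (V ⁻¹' {0})
          ≤ dist (u (ns (φ k))) (ρ (g k)⁻¹ x) := Metric.infDist_le_dist_of_mem (hxΓ k)
        _ = ‖ρ (g k) (u (ns (φ k))) - x‖ := by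
            rw [dist_eq_norm, ← hiso (g k) (u (ns (φ k)) - ρ (g k)⁻¹ x), map_sub]
            congr 2
            rw [← hmul, mul_inv_cancel, hρ1]
    have hnorm0 : Tendsto (fun k => ‖ρ (g k) (u (ns (φ k))) - x‖) atTop (𝓝 0) := by
      simpa using (tendsto_iff_norm_sub_tendsto_zero.mp hx)
    exact squeeze_zero (fun k => Metric.infDist_nonneg) hbound hnorm0
  · -- dist(u n, Γ) → 0 → V(u n) → 0
    apply tendsto_of_subseq_tendsto
    intro ns hns
    have hdist : Tendsto (fun n => Metric.infDist (u (ns n)) (V ⁻¹' {0})) atTop (𝓝 0) :=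
      h.comp hns
    -- choose approximating points in Γ
    have hchoice : ∀ n : ℕ, ∃ v : X, v ∈ V ⁻¹' {0} ∧
        dist (u (ns n)) v < Metric.infDist (u (ns n)) (V ⁻¹' {0}) + 1 / (n + 1) := by
      intro n
      have hlt : Metric.infDist (u (ns n)) (V ⁻¹' {0})
          < Metric.infDist (u (ns n)) (V ⁻¹' {0}) + 1 / (n + 1) := by
        have : (0 : ℝ) < 1 / (n + 1) := by positivity
        linarith
      obtain ⟨y, hy, hy'⟩ := (Metric.infDist_lt_iff ⟨x₀, hx₀⟩).mp hlt
      exact ⟨y, hy, hy'⟩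
    choose v hvΓ hvd using hchoice
    have hvdist : Tendsto (fun n => dist (u (ns n)) (v n)) atTop (𝓝 0) := by
      have hub : Tendsto (fun n : ℕ =>
          Metric.infDist (u (ns n)) (V ⁻¹' {0}) + 1 / (n + 1)) atTop (𝓝 0) := by
        have h2 : Tendsto (fun n : ℕ => 1 / ((n : ℝ) + 1)) atTop (𝓝 0) :=
          tendsto_one_div_add_atTop_nhds_zero_nat
        simpa using hdist.add h2
      exact squeeze_zero (fun n => dist_nonneg) (fun n => (hvd n).le) hub
    obtain ⟨φ, hφ, g, w, hw⟩ := part1 v hvΓ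
    refine ⟨φ, ?_⟩
    -- ρ (g k) (u (ns (φ k))) → w
    have hdiff : Tendsto (fun k => ρ (g k) (u (ns (φ k))) - ρ (g k) (v (φ k))) atTop (𝓝 0) := by
      rw [tendsto_zero_iff_norm_tendsto_zero]
      have : ∀ k, ‖ρ (g k) (u (ns (φ k))) - ρ (g k) (v (φ k))‖ = dist (u (ns (φ k))) (v (φ k)) := by
        intro k
        rw [dist_eq_norm, ← hiso (g k) (u (ns (φ k)) - v (φ k)), map_sub]
      simp only [this]
      exact hvdist.comp hφ.tendsto_atTop
    have hconv : Tendsto (fun k => ρ (g k) (u (ns (φ k)))) atTop (𝓝 w) := by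
      have := hw.add hdiff
      simpa using this.congr (fun k => by abel)
    -- V w = 0
    have hVw : V w = 0 := by
      have h1 : Tendsto (fun k => V (ρ (g k) (v (φ k)))) atTop (𝓝 (V w)) :=
        (hVcont.tendsto w).comp hw
      have h2 : (fun k => V (ρ (g k) (v (φ k)))) = fun _ => (0 : ℝ) :=
        funext fun k => by rw [hVinv]; exact hvΓ (φ k)
      rw [h2] at h1
      exact (tendsto_nhds_unique tendsto_const_nhds h1).symm
    have : Tendsto (fun k => V (ρ (g k) (u (ns (φ k))))) atTop (𝓝 (V w)) :=
      (hVcont.tendsto w).comp hconv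
    rw [hVw] at this
    simpa [hVinv] using this

end
end
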